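/- Let J be an invertible linear map on a real inner product space, r a vector, and let δq = J⁻¹ r be the Newton correction. For a known root q₀, define the deflated residual D(q)·r(q) where D(q) = (1/‖q−q₀‖^p + a)·I with p > 0, a ≥ 0, and ‖q−q₀‖ ≠ 0. Then the Newton correction for the deflated system at q equals τ·δq, where the scalar τ = (1 + a‖q−q₀‖^p) / (1 + a‖q−q₀‖^p − p‖q−q₀‖^{−2}⟨q−q₀, δq⟩), provided the denominator is nonzero. That is, deflation rescales the undeflated Newton step by a scalar factor. -/

import Mathlib

open RealInnerProductSpace

/-- Deflation rescales the undeflated Newton step by a scalar factor.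

Let `J` be an invertible linear map on a real inner product space, `r` the residual
vector and `δq = J⁻¹ r` the Newton correction.  For a known root `q₀`, the deflated
residual is `m(q) • r(q)` with scalar deflation factor `m(q) = ‖q − q₀‖⁻ᵖ + a`
(`p > 0`, `a ≥ 0`, `‖q − q₀‖ ≠ 0`), whose derivative in direction `v` is
`−p ‖q − q₀‖^(−p−2) ⟪q − q₀, v⟫`.  Then the deflated Newton step, i.e. the solution
`δq'` of `Dm(q)(δq') • r + m(q) • J δq' = m(q) • r`, equals `τ • δq` with
`τ = (1 + a‖q−q₀‖ᵖ) / (1 + a‖q−q₀‖ᵖ − p‖q−q₀‖⁻² ⟪q−q₀, δq⟫)`, provided the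
denominator is nonzero. -/
theorem deflated_newton_step_is_scaled
    {E : Type*} [NormedAddCommGroup E] [InnerProductSpace ℝ E]
    (J : E ≃L[ℝ] E) (r q q₀ : E) (p a : ℝ)
    (hp : 0 < p) (ha : 0 ≤ a) (hq : ‖q - q₀‖ ≠ 0)
    (δq : E) (hδq : δq = J.symm r)
    (τ : ℝ)
    (hτ : τ = (1 + a * ‖q - q₀‖ ^ p) /
        (1 + a * ‖q - q₀‖ ^ p - p * ‖q - q₀‖ ^ (-2 : ℝ) * ⟪q - q₀, δq⟫))
    (hden : 1 + a * ‖q - q₀‖ ^ p - p * ‖q - q₀‖ ^ (-2 : ℝ) * ⟪q - q₀, δq⟫ ≠ 0) :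
    (-p * ‖q - q₀‖ ^ (-p - 2) * ⟪q - q₀, τ • δq⟫) • r
      + (‖q - q₀‖ ^ (-p) + a) • (J (τ • δq))
      = (‖q - q₀‖ ^ (-p) + a) • r := by
  set n : ℝ := ‖q - q₀‖ with hn
  have hn0 : 0 < n := lt_of_le_of_ne (norm_nonneg _) (Ne.symm hq)
  have hJ : J (τ • δq) = τ • r := by
    rw [hδq, map_smul]; congr 1; exact J.apply_symm_apply r
  rw [hJ, inner_smul_right, smul_smul, ← add_smul]
  congr 1
  set c : ℝ := ⟪q - q₀, δq⟫
  have hnp : n ^ (-p) * n ^ p = 1 := by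
    rw [← Real.rpow_add hn0]; simp
  have hsplit : n ^ (-p - 2 : ℝ) = n ^ (-p) * n ^ (-2 : ℝ) := by
    rw [← Real.rpow_add hn0]; ring_nf
  rw [hτ, hsplit]
  field_simp
  linear_combination (-a * p * n ^ (-2:ℝ) * c) * hnp
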